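/- Let G be a nonempty compact Hausdorff space equipped with a continuous associative multiplication μ : G × G → G which satisfies cancellation on both sides (i.e., st = s't implies s = s', and ts = ts' implies s = s'). Then G is a compact topological group: there exists an identity element, every element has an inverse, and the inversion map is continuous. -/

import Mathlib

/-- A nonempty compact Hausdorff space with a continuous associative multiplication
satisfying two-sided cancellation is a compact topological group: it has an identity,
every element has a two-sided inverse, and inversion is continuous. -/
theorem stmt_7 (G : Type*) [TopologicalSpace G] [CompactSpace G] [T2Space G] [Nonempty G]
    (μ : G → G → G) (hcont : Continuous fun p : G × G => μ p.1 p.2)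
    (hassoc : ∀ a b c : G, μ (μ a b) c = μ a (μ b c))
    (hrc : ∀ s s' t : G, μ s t = μ s' t → s = s')
    (hlc : ∀ t s s' : G, μ t s = μ t s' → s = s') :
    ∃ e : G, (∀ g : G, μ e g = g ∧ μ g e = g) ∧
      ∃ inv : G → G, Continuous inv ∧ ∀ g : G, μ g (inv g) = e ∧ μ (inv g) g = e := by
  letI : Semigroup G := { mul := μ, mul_assoc := hassoc }
  have hmul : ∀ a b : G, a * b = μ a b := fun _ _ => rfl
  have hcr : ∀ r : G, Continuous (· * r) :=
    fun r => hcont.comp (continuous_id.prodMk continuous_const)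
  have hcl : ∀ a : G, Continuous (a * ·) :=
    fun a => hcont.comp (continuous_const.prodMk continuous_id)
  obtain ⟨e, hee⟩ := exists_idempotent_of_compact_t2_of_continuous_mul_left hcr
  -- e is a two-sided identity
  have hle : ∀ g : G, e * g = g := fun g =>
    hlc e _ _ (by simp only [← hmul, ← mul_assoc, hee])
  have hre : ∀ g : G, g * e = g := fun g =>
    hrc _ _ e (by simp only [← hmul, mul_assoc, hee])
  -- any idempotent equals e
  have hidem : ∀ m : G, m * m = m → m = e := fun m hm =>
    hlc m _ _ (by simp only [← hmul]; rw [hm, hre])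
  -- every element has a right inverse
  have key : ∀ g : G, ∃ h : G, g * h = e := by
    intro g
    set L : G → G := fun x => g * x with hL
    have hLc : Continuous L := hcl g
    set S : ℕ → Set G := fun n => L^[n + 1] '' Set.univ with hS
    have hScpt : ∀ n, IsCompact (S n) := fun n => isCompact_univ.image (hLc.iterate _)
    have hScl : ∀ n, IsClosed (S n) := fun n => (hScpt n).isClosed
    have hSne : ∀ n, (S n).Nonempty := fun n => Set.Nonempty.image _ ⟨g, trivial⟩
    have hmono : ∀ n, S (n + 1) ⊆ S n := by
      intro n x hx
      obtain ⟨u, -, rfl⟩ := hx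
      exact ⟨L u, trivial, by rw [← Function.iterate_succ_apply]⟩
    have hanti : ∀ m n, m ≤ n → S n ⊆ S m := by
      intro m n hmn
      induction hmn with
      | refl => exact subset_rfl
      | step _ ih => exact fun x hx => ih (hmono _ hx)
    -- iterates commute with right multiplication
    have hiter : ∀ n (a y : G), L^[n] a * y = L^[n] (a * y) := by
      intro n
      induction n with
      | zero => intro a y; rfl
      | succ n ih =>
        intro a y
        rw [Function.iterate_succ_apply', Function.iterate_succ_apply', hL]
        simp only [mul_assoc, ih]
        exact congrArg (g * ·) (ih a y)
    -- each S n is a right ideal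
    have hideal : ∀ n x, x ∈ S n → ∀ y : G, x * y ∈ S n := by
      intro n x hx y
      obtain ⟨u, -, rfl⟩ := hx
      exact ⟨u * y, trivial, (hiter _ _ _).symm⟩
    set K : Set G := ⋂ n, S n with hK
    have hKne : K.Nonempty :=
      IsCompact.nonempty_iInter_of_directed_nonempty_isCompact_isClosed S
        (fun m n => ⟨max m n, hanti _ _ (le_max_left m n), hanti _ _ (le_max_right m n)⟩)
        hSne hScpt hScl
    have hKcpt : IsCompact K := (isClosed_iInter hScl).isCompact
    have hKmul : ∀ x ∈ K, ∀ y ∈ K, x * y ∈ K := by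
      intro x hx y _
      exact Set.mem_iInter.mpr fun n => hideal n x (Set.mem_iInter.mp hx n) y
    obtain ⟨m, hmK, hmm⟩ :=
      exists_idempotent_in_compact_subsemigroup hcr K hKne hKcpt hKmul
    have : m = e := hidem m hmm
    subst this
    obtain ⟨h, -, hh⟩ := Set.mem_iInter.mp hmK 0
    exact ⟨h, hh⟩
  -- two-sided inverses
  have key2 : ∀ g : G, ∃ h : G, g * h = e ∧ h * g = e := by
    intro g
    obtain ⟨h, hh⟩ := key g
    refine ⟨h, hh, hidem _ ?_⟩
    calc h * g * (h * g) = h * (g * h * g) := by simp only [mul_assoc]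
    _ = h * g := by rw [hh, hle]
  classical
  set inv : G → G := fun g => Classical.choose (key2 g) with hinv
  have hinvspec : ∀ g : G, g * inv g = e ∧ inv g * g = e :=
    fun g => Classical.choose_spec (key2 g)
  -- continuity of inv via the compact graph
  have hinvcont : Continuous inv := by
    set Γ : Set (G × G) := {p : G × G | p.1 * p.2 = e} with hΓ
    have hΓcl : IsClosed Γ := isClosed_eq hcont continuous_const
    haveI : CompactSpace Γ := isCompact_iff_compactSpace.mp hΓcl.isCompact
    have huniq : ∀ g h : G, g * h = e → h = inv g := by
      intro g h hgh
      exact hlc g _ _ (by rw [← hmul, ← hmul, hgh, (hinvspec g).1])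
    set φ : Γ ≃ G :=
      { toFun := fun p => p.1.1
        invFun := fun g => ⟨(g, inv g), (hinvspec g).1⟩
        left_inv := by
          rintro ⟨⟨g, h⟩, hp⟩
          exact Subtype.ext (Prod.ext_iff.mpr ⟨rfl, (huniq g h hp).symm⟩)
        right_inv := fun g => rfl } with hφ
    have hφc : Continuous φ := (continuous_fst.comp continuous_subtype_val)
    have : inv = (fun p : Γ => p.1.2) ∘ (hφc.homeoOfEquivCompactToT2 (f := φ)).symm := by
      funext g
      rfl
    rw [this]
    exact (continuous_snd.comp continuous_subtype_val).comp
      (hφc.homeoOfEquivCompactToT2 (f := φ)).symm.continuous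
  exact ⟨e, fun g => ⟨hle g, hre g⟩, inv, hinvcont, hinvspec⟩
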